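/- Scaled-node algebraic localization: for the transformed Chebyshev nodes x_i = T((cos(iπ/N)+1)/2)^p with p > 1, the proportion of nodes lying in [0, εT] tends, as N → ∞, to (2/π) arcsin(ε^{1/(2p)}); in particular, for any ε ∈ (0,1) this proportion grows as p increases, i.e., nodes cluster at the origin. -/

import Mathlib

open Real Filter

private lemma arcsin_double_aux (t : ℝ) (h0 : 0 ≤ t) (h1 : t ≤ 1) :
    Real.arcsin (2 * t ^ 2 - 1) = 2 * Real.arcsin t - Real.pi / 2 := by
  have hφ0 : 0 ≤ Real.arcsin t := Real.arcsin_nonneg.2 h0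
  have hφ1 : Real.arcsin t ≤  Real.pi / 2 := Real.arcsin_le_pi_div_two t
  have key : 2 * t ^ 2 - 1 = Real.sin (2 * Real.arcsin t - Real.pi / 2) := by
    rw [Real.sin_sub, Real.cos_pi_div_two, Real.sin_pi_div_two, Real.cos_two_mul]
    have hs : Real.sin (Real.arcsin t) = t := Real.sin_arcsin (by linarith) h1
    have := Real.sin_sq_add_cos_sq (Real.arcsin t)
    nlinarith [this, hs]
  rw [key, Real.arcsin_sin (by linarith) (by linarith)]

private lemma card_filter_le (N k : ℕ) :
    ((Finset.range (N+1)).filter (fun i => k ≤ i)).card = N + 1 - k := by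
  have : ((Finset.range (N+1)).filter (fun i => k ≤ i)) = Finset.Ico k (N+1) := by
    ext i
    simp [Finset.mem_filter, Finset.mem_Ico, and_comm]
  rw [this, Nat.card_Ico]

theorem scaled_node_clustering (T p ε : ℝ) (hT : 0 < T) (hp : 1 < p)
    (hε : ε ∈ Set.Ioo (0 : ℝ) 1) :
    Filter.Tendsto
      (fun N : ℕ =>
        (((Finset.range (N+1)).filter
          (fun i : ℕ => T * ((Real.cos ((i : ℝ) * Real.pi / (N : ℝ)) + 1) / 2) ^ p ≤ ε * T)).card : ℝ)
            / (N + 1 : ℝ))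
      Filter.atTop (nhds (2 / Real.pi * Real.arcsin (ε ^ (1 / (2 * p))))) ∧
    ∀ q q' : ℝ, 1 < q → q < q' →
      2 / Real.pi * Real.arcsin (ε ^ (1 / (2 * q))) <
        2 / Real.pi * Real.arcsin (ε ^ (1 / (2 * q'))) := by
  obtain ⟨hε0, hε1⟩ := hε
  have hπ : 0 < Real.pi := Real.pi_pos
  constructor
  · -- main limit
    set s' : ℝ := ε ^ (1 / (2 * p)) with hs'def
    have hp0 : 0 < p := by linarith
    have hs'0 : 0 < s' := Real.rpow_pos_of_pos hε0 _
    have hs'1 : s' < 1 := Real.rpow_lt_one hε0.le hε1 (by positivity)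
    -- s := ε^(1/p) = s'^2
    set s : ℝ := ε ^ (1 / p) with hsdef
    have hs0 : 0 < s := Real.rpow_pos_of_pos hε0 _
    have hs1 : s < 1 := Real.rpow_lt_one hε0.le hε1 (by positivity)
    have hss' : s = s' ^ 2 := by
      rw [hs'def, hsdef, ← Real.rpow_natCast (ε ^ (1/(2*p))) 2, ← Real.rpow_mul hε0.le]
      norm_num
      ring_nf
    set θ : ℝ := Real.arccos (2 * s - 1) with hθdef
    have hc1 : (-1 : ℝ) ≤ 2 * s - 1 := by linarith
    have hc2 : 2 * s - 1 ≤ 1 := by linarith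
    have hθ0 : 0 ≤ θ := Real.arccos_nonneg _
    have hθπ : θ ≤ Real.pi := Real.arccos_le_pi _
    -- identify limit
    have hLekey : 2 / Real.pi * Real.arcsin s' = 1 - θ / Real.pi := by
      rw [hθdef, Real.arccos_eq_pi_div_two_sub_arcsin, hss',
        arcsin_double_aux s' hs'0.le hs'1.le]
      field_simp
      ring
    rw [hLekey]
    -- the predicate rewrite
    have hpred : ∀ N : ℕ, 1 ≤ N → ∀ i : ℕ, i ∈ Finset.range (N+1) →
        ((T * ((Real.cos ((i : ℝ) * Real.pi / (N : ℝ)) + 1) / 2) ^ p ≤ ε * T) ↔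
          (⌈(N : ℝ) * θ / Real.pi⌉₊ ≤ i)) := by
      intro N hN i hi
      have hiN : i ≤ N := Nat.lt_succ_iff.mp (Finset.mem_range.mp hi)
      have hNpos : (0 : ℝ) < N := by exact_mod_cast hN
      set t : ℝ := (i : ℝ) * Real.pi / (N : ℝ) with htdef
      have ht0 : 0 ≤ t := by positivity
      have htπ : t ≤ Real.pi := by
        rw [htdef, div_le_iff₀ hNpos]
        have : (i : ℝ) ≤ N := by exact_mod_cast hiN
        nlinarith
      set x : ℝ := (Real.cos t + 1) / 2 with hxdef
      have hx0 : 0 ≤ x := by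
        have := Real.neg_one_le_cos t; rw [hxdef]; linarith
      have hx1 : x ≤ 1 := by
        have := Real.cos_le_one t; rw [hxdef]; linarith
      have step1 : (T * x ^ p ≤ ε * T) ↔ x ^ p ≤ ε := by
        rw [mul_comm ε T]
        exact mul_le_mul_iff_right₀ hT
      have step2 : x ^ p ≤ ε ↔ x ≤ s := by
        rw [hsdef, one_div, ← Real.le_rpow_inv_iff_of_pos hx0 hε0.le hp0]
      have step3 : x ≤ s ↔ Real.cos t ≤ 2 * s - 1 := by
        rw [hxdef]; constructor <;> intro h <;> linarith
      have hcosθ : Real.cos θ = 2 * s - 1 := Real.cos_arccos hc1 hc2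
      have step4 : Real.cos t ≤ 2 * s - 1 ↔ θ ≤ t := by
        rw [← hcosθ]
        constructor
        · intro h
          by_contra hlt
          push_neg at hlt
          have := Real.strictAntiOn_cos ⟨ht0, htπ⟩ ⟨hθ0, hθπ⟩ hlt
          linarith
        · intro h
          rcases eq_or_lt_of_le h with h' | h'
          · rw [h']
          · exact (Real.strictAntiOn_cos ⟨hθ0, hθπ⟩ ⟨ht0, htπ⟩ h').le
      have step5 : θ ≤ t ↔ (N : ℝ) * θ / Real.pi ≤ (i : ℝ) := by
        rw [htdef, le_div_iff₀ hNpos, div_le_iff₀ hπ]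
        constructor <;> intro h <;> linarith
      rw [step1, step2, step3, step4, step5, ← Nat.ceil_le]
    -- card formula
    have hcard : ∀ N : ℕ, 1 ≤ N →
        (((Finset.range (N+1)).filter
          (fun i : ℕ => T * ((Real.cos ((i : ℝ) * Real.pi / (N : ℝ)) + 1) / 2) ^ p ≤ ε * T)).card
          = N + 1 - ⌈(N : ℝ) * θ / Real.pi⌉₊) := by
      intro N hN
      rw [Finset.filter_congr (fun i hi => by
        simpa using (hpred N hN i hi))]
      simpa using card_filter_le N ⌈(N : ℝ) * θ / Real.pi⌉₊
    -- squeeze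
    have hdiff : Filter.Tendsto (fun N : ℕ =>
        (((Finset.range (N+1)).filter
          (fun i : ℕ => T * ((Real.cos ((i : ℝ) * Real.pi / (N : ℝ)) + 1) / 2) ^ p ≤ ε * T)).card : ℝ)
            / (N + 1 : ℝ) - (1 - θ / Real.pi)) Filter.atTop (nhds 0) := by
      apply squeeze_zero_norm' (a := fun N : ℕ => 1 / ((N : ℝ) + 1))
      · filter_upwards [Filter.eventually_ge_atTop 1] with N hN
        have hNpos : (0 : ℝ) < N := by exact_mod_cast hN
        have hN1 : (0 : ℝ) < (N : ℝ) + 1 := by linarith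
        rw [hcard N hN]
        set a : ℝ := (N : ℝ) * θ / Real.pi with hadef
        have ha0 : 0 ≤ a := by positivity
        have haN : a ≤ N := by
          rw [hadef, div_le_iff₀ hπ]
          nlinarith
        have hceil_le : (⌈a⌉₊ : ℝ) ≤ (N : ℝ) := by
          exact_mod_cast Nat.ceil_le.2 haN
        have hceilN : ⌈a⌉₊ ≤ N + 1 := by
          have : ⌈a⌉₊ ≤ N := Nat.ceil_le.2 haN
          omega
        have hcast : ((N + 1 - ⌈a⌉₊ : ℕ) : ℝ) = (N : ℝ) + 1 - (⌈a⌉₊ : ℝ) := by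
          push_cast [Nat.cast_sub hceilN]
          ring
        rw [hcast]
        have h1 : a ≤ (⌈a⌉₊ : ℝ) := Nat.le_ceil a
        have h2 : (⌈a⌉₊ : ℝ) < a + 1 := Nat.ceil_lt_add_one ha0
        have hu0 : 0 ≤ θ / Real.pi := by positivity
        have hu1 : θ / Real.pi ≤ 1 := by rw [div_le_one hπ]; exact hθπ
        have hae : a = (N : ℝ) * (θ / Real.pi) := by rw [hadef]; ring
        have heq : ((N : ℝ) + 1 - (⌈a⌉₊ : ℝ)) / ((N : ℝ) + 1) - (1 - θ / Real.pi)
            = (a + θ / Real.pi - (⌈a⌉₊ : ℝ)) / ((N : ℝ) + 1) := by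
          rw [hae]
          field_simp
          ring
        rw [heq, Real.norm_eq_abs, abs_div, abs_of_pos hN1]
        have hnum : |a + θ / Real.pi - (⌈a⌉₊ : ℝ)| ≤ 1 := by
          rw [abs_le]
          constructor <;> linarith
        exact (div_le_div_iff_of_pos_right hN1).2 hnum
      · exact tendsto_one_div_add_atTop_nhds_zero_nat
    have := hdiff.add (tendsto_const_nhds (x := (1 - θ / Real.pi)))
    simpa using this
  · -- monotonicity
    intro q q' hq hqq'
    have hq0 : 0 < q := by linarith
    have hq'0 : 0 < q' := by linarith
    have hexp : 1 / (2 * q') < 1 / (2 * q) := by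
      apply one_div_lt_one_div_of_lt <;> nlinarith
    have hlt : ε ^ (1 / (2 * q)) < ε ^ (1 / (2 * q')) :=
      Real.rpow_lt_rpow_of_exponent_gt hε0 hε1 hexp
    have h1 : ε ^ (1 / (2 * q)) ∈ Set.Icc (-1 : ℝ) 1 := by
      constructor
      · have := Real.rpow_pos_of_pos hε0 (1 / (2 * q)); linarith
      · exact (Real.rpow_le_one hε0.le hε1.le (by positivity))
    have h2 : ε ^ (1 / (2 * q')) ∈ Set.Icc (-1 : ℝ) 1 := by
      constructor
      · have := Real.rpow_pos_of_pos hε0 (1 / (2 * q')); linarith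
      · exact (Real.rpow_le_one hε0.le hε1.le (by positivity))
    have harc := Real.strictMonoOn_arcsin h1 h2 hlt
    have h2π : 0 < 2 / Real.pi := by positivity
    exact mul_lt_mul_of_pos_left harc h2π
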